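/- Three-term contiguous relation (equation (3.3) of the paper): For every integer n ≥ 0 and complex q, a, b with q ≠ 0, a ≠ 0, b ≠ 0 such that all factors appearing in denominators below are nonzero (in particular 1 − abq^{2n−1} ≠ 0 and 1 − q^{1-2n}/(ab) ≠ 0), one has Σ_{k=0}^{n} (q^{-2n};q²)_k (a;q²)_k (b;q²)_k (q^{3-2n}/(ab);q²)_k q^{2k} / ((q²;q²)_k (q^{2-2n}/a;q²)_k (q^{4-2n}/b;q²)_k (abq;q²)_k) = [bq^{2n−2}(1−aq)/(1−abq^{2n−1})] · Σ_{k=0}^{n} (q^{-2n};q²)_k (a;q²)_k (b;q²)_k (q^{1-2n}/(ab);q²)_k q^{2k} / ((q²;q²)_k (q^{2-2n}/a;q²)_k (q^{4-2n}/b;q²)_k (abq;q²)_k) + [(1−bq^{2n−2})/(1−abq^{2n−1})] · Σ_{k=0}^{n} (q^{-2n};q²)_k (a;q²)_k (b;q²)_k (q^{1-2n}/(ab);q²)_k q^{2k} / ((q²;q²)_k (q^{2-2n}/a;q²)_k (q^{2-2n}/b;q²)_k (abq;q²)_k). -/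

import Mathlib

/-- The q-shifted factorial `(a; q)ₙ = ∏_{i=0}^{n-1} (1 - a qⁱ)`. -/
noncomputable def qPoch (a q : ℂ) (n : ℕ) : ℂ := ∏ i ∈ Finset.range n, (1 - a * q ^ i)

lemma qPoch_shift (a q : ℂ) (k : ℕ) :
    (1 - a) * qPoch (a * q) q k = qPoch a q k * (1 - a * q ^ k) := by
  have h2 : qPoch a q (k + 1) = (1 - a) * qPoch (a * q) q k := by
    rw [qPoch, Finset.prod_range_succ', pow_zero, mul_one, mul_comm]
    congr 1
    · rw [qPoch]
      refine Finset.prod_congr rfl fun i _ => ?_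
      ring
  rw [← h2, qPoch, Finset.prod_range_succ, ← qPoch]

lemma qPoch_shift' (p s q : ℂ) (hs : s ≠ 0) (k : ℕ) :
    (s - p) * qPoch (p / s * q) q k = qPoch (p / s) q k * (s - p * q ^ k) := by
  have h := qPoch_shift (p / s) q k
  calc (s - p) * qPoch (p / s * q) q k
      = s * ((1 - p / s) * qPoch (p / s * q) q k) := by
        rw [← mul_assoc]
        congr 1
        field_simp
    _ = s * (qPoch (p / s) q k * (1 - p / s * q ^ k)) := by rw [h]
    _ = qPoch (p / s) q k * (s - p * q ^ k) := by
        rw [← mul_assoc, mul_comm s, mul_assoc]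
        congr 1
        field_simp


lemma term_key (P0 PA PB C D CQ DQ P1 P2 P5 X Y u q a b : ℂ)
    (n1 : P1 ≠ 0) (n2 : P2 ≠ 0) (n3 : D ≠ 0) (n4 : DQ ≠ 0) (n5 : P5 ≠ 0)
    (hqu : q * u - a * b * q ≠ 0)
    (r1 : (a * b - u) * CQ = C * (a * b - u * Y))
    (r2 : (b - q * u) * DQ = D * (b - q * u * Y)) :
    P0 * PA * PB * CQ * X / (P1 * P2 * DQ * P5) =
      b * (1 - a * q) / (q * u - a * b * q) * (P0 * PA * PB * C * X / (P1 * P2 * DQ * P5)) +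
      (q * u - b) / (q * u - a * b * q) * (P0 * PA * PB * C * X / (P1 * P2 * D * P5)) := by
  have key : CQ * (q * u - a * b * q) * D = b * (1 - a * q) * C * D + (q * u - b) * (C * DQ) := by
    linear_combination (-q * D) * r1 + C * r2
  have hden1 : P1 * P2 * DQ * P5 ≠ 0 :=
    mul_ne_zero (mul_ne_zero (mul_ne_zero n1 n2) n4) n5
  have hden2 : P1 * P2 * D * P5 ≠ 0 :=
    mul_ne_zero (mul_ne_zero (mul_ne_zero n1 n2) n3) n5
  rw [div_mul_div_comm, div_mul_div_comm,
      div_add_div _ _ (mul_ne_zero hqu hden1) (mul_ne_zero hqu hden2),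
      div_eq_div_iff hden1 (mul_ne_zero (mul_ne_zero hqu hden1) (mul_ne_zero hqu hden2))]
  linear_combination
    (P0 * PA * PB * X * (q * u - a * b * q) * (P1 * P2 * DQ * P5) * (P1 * P2 * P5)) * key


set_option maxHeartbeats 1000000 in
/-- The three-term contiguous relation (3.3) of the paper. -/
theorem andrews_three_term_relation (n : ℕ) (q a b : ℂ)
    (hq : q ≠ 0) (ha : a ≠ 0) (hb : b ≠ 0)
    (h1 : ∀ k ≤ n, qPoch (q ^ 2) (q ^ 2) k ≠ 0)
    (h2 : ∀ k ≤ n, qPoch (q ^ (2 - 2 * (n : ℤ)) / a) (q ^ 2) k ≠ 0)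
    (h3 : ∀ k ≤ n, qPoch (q ^ (2 - 2 * (n : ℤ)) / b) (q ^ 2) k ≠ 0)
    (h4 : ∀ k ≤ n, qPoch (q ^ (4 - 2 * (n : ℤ)) / b) (q ^ 2) k ≠ 0)
    (h5 : ∀ k ≤ n, qPoch (a * b * q) (q ^ 2) k ≠ 0)
    (h6 : 1 - a * b * q ^ (2 * (n : ℤ) - 1) ≠ 0)
    (h7 : 1 - q ^ (1 - 2 * (n : ℤ)) / (a * b) ≠ 0) :
    ∑ k ∈ Finset.range (n + 1),
      qPoch (q ^ (-2 * (n : ℤ))) (q ^ 2) k * qPoch a (q ^ 2) k * qPoch b (q ^ 2) k *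
          qPoch (q ^ (3 - 2 * (n : ℤ)) / (a * b)) (q ^ 2) k * q ^ (2 * k) /
        (qPoch (q ^ 2) (q ^ 2) k * qPoch (q ^ (2 - 2 * (n : ℤ)) / a) (q ^ 2) k *
          qPoch (q ^ (4 - 2 * (n : ℤ)) / b) (q ^ 2) k * qPoch (a * b * q) (q ^ 2) k) =
      b * q ^ (2 * (n : ℤ) - 2) * (1 - a * q) / (1 - a * b * q ^ (2 * (n : ℤ) - 1)) *
        ∑ k ∈ Finset.range (n + 1),
          qPoch (q ^ (-2 * (n : ℤ))) (q ^ 2) k * qPoch a (q ^ 2) k * qPoch b (q ^ 2) k *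
              qPoch (q ^ (1 - 2 * (n : ℤ)) / (a * b)) (q ^ 2) k * q ^ (2 * k) /
            (qPoch (q ^ 2) (q ^ 2) k * qPoch (q ^ (2 - 2 * (n : ℤ)) / a) (q ^ 2) k *
              qPoch (q ^ (4 - 2 * (n : ℤ)) / b) (q ^ 2) k * qPoch (a * b * q) (q ^ 2) k) +
      (1 - b * q ^ (2 * (n : ℤ) - 2)) / (1 - a * b * q ^ (2 * (n : ℤ) - 1)) *
        ∑ k ∈ Finset.range (n + 1),
          qPoch (q ^ (-2 * (n : ℤ))) (q ^ 2) k * qPoch a (q ^ 2) k * qPoch b (q ^ 2) k *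
              qPoch (q ^ (1 - 2 * (n : ℤ)) / (a * b)) (q ^ 2) k * q ^ (2 * k) /
            (qPoch (q ^ 2) (q ^ 2) k * qPoch (q ^ (2 - 2 * (n : ℤ)) / a) (q ^ 2) k *
              qPoch (q ^ (2 - 2 * (n : ℤ)) / b) (q ^ 2) k * qPoch (a * b * q) (q ^ 2) k) := by
  have hu0 : q ^ (1 - 2 * (n : ℤ)) ≠ 0 := zpow_ne_zero _ hq
  set u := q ^ (1 - 2 * (n : ℤ)) with hu
  have e2 : q ^ (2 - 2 * (n : ℤ)) = q * u := by
    rw [hu, show (2 - 2 * (n : ℤ)) = 1 + (1 - 2 * n) by ring, zpow_add₀ hq, zpow_one]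
  have e3 : q ^ (3 - 2 * (n : ℤ)) = q ^ 2 * u := by
    rw [hu, show (3 - 2 * (n : ℤ)) = 2 + (1 - 2 * n) by ring, zpow_add₀ hq]
    norm_num
  have e4 : q ^ (4 - 2 * (n : ℤ)) = q ^ 3 * u := by
    rw [hu, show (4 - 2 * (n : ℤ)) = 3 + (1 - 2 * n) by ring, zpow_add₀ hq]
    norm_num
  have em : q ^ (-2 * (n : ℤ)) = u / q := by
    rw [hu, show (-2 * (n : ℤ)) = (1 - 2 * n) - 1 by ring, zpow_sub₀ hq, zpow_one]
  have eA : q ^ (2 * (n : ℤ) - 1) = u⁻¹ := by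
    rw [hu, show (2 * (n : ℤ) - 1) = -(1 - 2 * n) by ring, zpow_neg]
  have eB : q ^ (2 * (n : ℤ) - 2) = (q * u)⁻¹ := by
    rw [show (2 * (n : ℤ) - 2) = -(2 - 2 * n) by ring, zpow_neg, e2]
  rw [e2] at h2 h3 ⊢
  rw [e4] at h4 ⊢
  rw [eA] at h6 ⊢
  rw [e3, em, eB]
  rw [show q ^ 2 * u / (a * b) = u / (a * b) * q ^ 2 by ring]
  rw [show q ^ 3 * u / b = q * u / b * q ^ 2 by ring] at h4 ⊢
  have h6' : 1 - a * b * u⁻¹ ≠ 0 := h6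
  clear_value u
  rcases Nat.eq_zero_or_pos n with hn | hn
  · subst hn
    have huq : u = q := by rw [hu]; norm_num
    rw [huq] at h6' ⊢
    have h9 : q - a * b ≠ 0 := by
      intro h
      apply h6'
      field_simp
      linear_combination h
    simp only [zero_add, Finset.sum_range_one, qPoch, Finset.prod_range_zero]
    have hs : -(b * a * q ^ 2) + q ^ 3 ≠ 0 := by
      have : -(b * a * q ^ 2) + q ^ 3 = q ^ 2 * (q - a * b) := by ring
      rw [this]
      exact mul_ne_zero (pow_ne_zero 2 hq) h9
    have h9' : q - b * a ≠ 0 := by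
      intro h; apply h9; linear_combination h
    field_simp
    ring
  · have hd : (1 - q * u / b) ≠ 0 := by
      have := h3 1 hn
      simpa [qPoch] using this
    have hqu : q * u - a * b * q ≠ 0 := by
      have h' : (1 - a * b * u⁻¹) * (q * u) = q * u - a * b * q := by
        field_simp
      rw [← h']
      exact mul_ne_zero h6' (mul_ne_zero hq hu0)
    have cA : b * (q * u)⁻¹ * (1 - a * q) / (1 - a * b * u⁻¹) =
        b * (1 - a * q) / (q * u - a * b * q) := by
      rw [div_eq_div_iff h6' hqu]
      field_simp
    have cB : (1 - b * (q * u)⁻¹) / (1 - a * b * u⁻¹) =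
        (q * u - b) / (q * u - a * b * q) := by
      rw [div_eq_div_iff h6' hqu]
      field_simp
    rw [cA, cB]
    rw [Finset.mul_sum, Finset.mul_sum, ← Finset.sum_add_distrib]
    refine Finset.sum_congr rfl fun k hk => ?_
    have hk' : k ≤ n := Finset.mem_range_succ_iff.mp hk
    have hba : b - q * u ≠ 0 := by
      intro h
      apply hd
      field_simp
      linear_combination h
    have hab : a * b - u ≠ 0 := by
      intro h
      apply hqu
      linear_combination -q * h
    have r1 := qPoch_shift' u (a * b) (q ^ 2) (mul_ne_zero ha hb) k
    have r2 := qPoch_shift' (q * u) b (q ^ 2) hb k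
    have n4 := h4 k hk'
    exact term_key _ _ _ _ _ _ _ _ _ _ _ _ u q a b
      (h1 k hk') (h2 k hk') (h3 k hk') n4 (h5 k hk') hqu r1 r2
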